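/- Let u ∈ ℝ^n, R > 0 and S = {x ∈ ℝ^n : ‖x − u‖ ≤ R}. Let F : ℝ^n → ℝ be differentiable such that ∇F is L-Lipschitz continuous on S and ⟨∇F(x) − ∇F(y), x − y⟩ ≥ m‖x − y‖² for all x, y ∈ S, where m > 0. Let x̄ ∈ S be a critical point of F over S, i.e. −∇F(x̄) ∈ N_S(x̄). Then there exist σ > 0 and an open neighborhood V of x̄ such that for every x ∈ V ∩ S and every ξ ∈ N_S(x) it holds F(x) − F(x̄) ≤ σ·‖∇F(x) + ξ‖². (In the language of the paper: F + ι_S satisfies the Kurdyka–Łojasiewicz property at x̄ with exponent 1/2, i.e. with desingularization function φ(s) = 2σ'√s.) -/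

import Mathlib

open RealInnerProductSpace

/-- Let `S` be a closed Euclidean ball, and let `F` be differentiable with
`L`-Lipschitz gradient on `S` and strongly monotone gradient on `S` with modulus `m > 0`.
If `x̄` is a critical point of `F` over `S` (i.e. `−∇F(x̄) ∈ N_S(x̄)`), then there are
`σ > 0` and an open neighborhood `V` of `x̄` such that
`F(x) − F(x̄) ≤ σ‖∇F(x) + ξ‖²` for all `x ∈ V ∩ S` and `ξ ∈ N_S(x)`:
the KL property with exponent `1/2`. -/
theorem stmt_15 (n : ℕ) (u : EuclideanSpace ℝ (Fin n)) (R : ℝ) (hR : 0 < R)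
    (S : Set (EuclideanSpace ℝ (Fin n)))
    (hSdef : S = {y | ‖y - u‖ ≤ R})
    (F : EuclideanSpace ℝ (Fin n) → ℝ)
    (gF : EuclideanSpace ℝ (Fin n) → EuclideanSpace ℝ (Fin n))
    (hF : ∀ x, HasGradientAt F (gF x) x)
    (L m : ℝ) (hm : 0 < m)
    (hLip : ∀ x ∈ S, ∀ y ∈ S, ‖gF x - gF y‖ ≤ L * ‖x - y‖)
    (hmono : ∀ x ∈ S, ∀ y ∈ S, m * ‖x - y‖ ^ 2 ≤ ⟪gF x - gF y, x - y⟫)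
    (xbar : EuclideanSpace ℝ (Fin n)) (hxbar : xbar ∈ S)
    (hcrit : ∀ y ∈ S, ⟪-gF xbar, y - xbar⟫ ≤ 0) :
    ∃ σ : ℝ, 0 < σ ∧ ∃ V : Set (EuclideanSpace ℝ (Fin n)), IsOpen V ∧ xbar ∈ V ∧
      ∀ x ∈ V ∩ S, ∀ ξ : EuclideanSpace ℝ (Fin n),
        (∀ y ∈ S, ⟪ξ, y - x⟫ ≤ 0) → F x - F xbar ≤ σ * ‖gF x + ξ‖ ^ 2 := by
  -- S is convex
  have hSconv : Convex ℝ S := by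
    rw [hSdef]
    have : {y : EuclideanSpace ℝ (Fin n) | ‖y - u‖ ≤ R} = Metric.closedBall u R := by
      ext y; simp [Metric.mem_closedBall, dist_eq_norm]
    rw [this]
    exact convex_closedBall u R
  refine ⟨1 / m, by positivity, Set.univ, isOpen_univ, Set.mem_univ _, ?_⟩
  rintro x ⟨-, hxS⟩ ξ hξ
  set v := x - xbar with hv
  have hξv : 0 ≤ ⟪ξ, v⟫ := by
    have := hξ xbar hxbar
    have h2 : ⟪ξ, xbar - x⟫ = -⟪ξ, v⟫ := by
      rw [hv, show xbar - x = -(x - xbar) from by abel, inner_neg_right]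
    rw [h2] at this; linarith
  have hcv : 0 ≤ ⟪gF xbar, v⟫ := by
    have := hcrit x hxS
    rw [inner_neg_left] at this
    linarith
  by_cases hveq : v = 0
  · have hx : x = xbar := by
      have := sub_eq_zero.mp hveq; exact this
    rw [hx]
    have : 0 ≤ (1 / m) * ‖gF xbar + ξ‖ ^ 2 := by positivity
    linarith
  -- segment points are in S
  have hseg : ∀ t : ℝ, t ∈ Set.Icc (0:ℝ) 1 → xbar + t • v ∈ S := by
    intro t ht
    have h := hSconv hxbar hxS (by linarith [ht.2] : (0:ℝ) ≤ 1 - t) ht.1 (by ring)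
    convert h using 1
    rw [hv]
    module
  -- derivative of g t = F (xbar + t • v)
  have hg : ∀ t : ℝ, HasDerivAt (fun t : ℝ => F (xbar + t • v)) ⟪gF (xbar + t • v), v⟫ t := by
    intro t
    have hz : HasDerivAt (fun t : ℝ => xbar + t • v) v t := by
      simpa using ((hasDerivAt_id t).smul_const v).const_add xbar
    have := ((hF (xbar + t • v)).hasFDerivAt).comp_hasDerivAt t hz
    exact (by simpa using this : HasDerivAt (F ∘ fun t : ℝ => xbar + t • v) ⟪gF (xbar + t • v), v⟫ t)
  -- MVT
  obtain ⟨c, hc, hceq⟩ := exists_hasDerivAt_eq_slope (fun t : ℝ => F (xbar + t • v))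
    (fun t => ⟪gF (xbar + t • v), v⟫) (by norm_num : (0:ℝ) < 1)
    (fun t _ => (hg t).continuousAt.continuousWithinAt) (fun t _ => hg t)
  have hzc : xbar + c • v ∈ S := hseg c ⟨hc.1.le, hc.2.le⟩
  have hslope : F x - F xbar = ⟪gF (xbar + c • v), v⟫ := by
    have h1 : xbar + (1:ℝ) • v = x := by rw [hv]; module
    have h0 : xbar + (0:ℝ) • v = xbar := by module
    rw [hceq]; rw [h1, h0]; ring
  -- monotonicity: ⟪gF x - gF (xbar + c•v), v⟫ ≥ 0
  have hmon : 0 ≤ ⟪gF x - gF (xbar + c • v), v⟫ := by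
    have h := hmono x hxS (xbar + c • v) hzc
    have hx_sub : x - (xbar + c • v) = (1 - c) • v := by rw [hv]; module
    rw [hx_sub, real_inner_smul_right] at h
    have h0 : 0 ≤ m * ‖x - (xbar + c • v)‖ ^ 2 := by positivity
    rw [hx_sub] at h0
    nlinarith [hc.2]
  have key : F x - F xbar ≤ ⟪gF x, v⟫ := by
    rw [hslope]
    have : ⟪gF x - gF (xbar + c • v), v⟫ = ⟪gF x, v⟫ - ⟪gF (xbar + c • v), v⟫ := by
      rw [inner_sub_left]
    linarith
  -- error bound: m ‖v‖ ≤ ‖gF x + ξ‖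
  have hvpos : 0 < ‖v‖ := norm_pos_iff.mpr hveq
  have hEB : m * ‖v‖ ≤ ‖gF x + ξ‖ := by
    have h := hmono x hxS xbar hxbar
    rw [← hv] at h
    have hsum : ⟪gF x + ξ, v⟫ = ⟪gF x - gF xbar, v⟫ + ⟪gF xbar, v⟫ + ⟪ξ, v⟫ := by
      rw [inner_add_left, inner_sub_left]; ring
    have hcs : ⟪gF x + ξ, v⟫ ≤ ‖gF x + ξ‖ * ‖v‖ := real_inner_le_norm _ _
    nlinarith [h, hsum, hcs, hξv, hcv, hvpos]
  have hfin : F x - F xbar ≤ ‖gF x + ξ‖ * ‖v‖ := by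
    have : ⟪gF x, v⟫ ≤ ⟪gF x + ξ, v⟫ := by rw [inner_add_left]; linarith
    calc F x - F xbar ≤ ⟪gF x + ξ, v⟫ := by linarith
      _ ≤ ‖gF x + ξ‖ * ‖v‖ := real_inner_le_norm _ _
  have hnn : 0 ≤ ‖gF x + ξ‖ := norm_nonneg _
  calc F x - F xbar ≤ ‖gF x + ξ‖ * ‖v‖ := hfin
    _ ≤ ‖gF x + ξ‖ * (‖gF x + ξ‖ / m) := by
        apply mul_le_mul_of_nonneg_left _ hnn
        rw [le_div_iff₀ hm]; linarith [hEB]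
    _ = (1 / m) * ‖gF x + ξ‖ ^ 2 := by ring
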